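/- For every natural number n ≥ 18, the game chromatic number of the 4×n grid graph satisfies χ_g(P_4 □ P_n) ≥ 4; that is, Bob has a winning strategy in the 3-coloring game on P_4 □ P_n. -/

import Mathlib

open SimpleGraph

/-- A move coloring vertex `v` with color `col` is valid for the partial coloring `c`
if `v` is uncolored and no neighbor of `v` already has color `col`. -/
def validMove {V : Type*} (G : SimpleGraph V) {k : ℕ} (c : V → Option (Fin k))
    (v : V) (col : Fin k) : Prop :=
  c v = none ∧ ∀ u, G.Adj u v → c u ≠ some col

/-- All vertices are colored. -/
def allColored {V : Type*} {k : ℕ} (c : V → Option (Fin k)) : Prop :=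
  ∀ v, c v ≠ none

/-- `AliceWins G k turn c` : starting from the partial proper coloring `c` of `G`,
with `turn = true` meaning that it is Alice's move (`turn = false` : Bob's move),
Alice can force the `k`-coloring game to end with every vertex colored. -/
inductive AliceWins {V : Type*} [DecidableEq V] (G : SimpleGraph V) (k : ℕ) :
    Bool → (V → Option (Fin k)) → Prop
  | finished (turn : Bool) (c : V → Option (Fin k)) (h : allColored c) :
      AliceWins G k turn c
  | aliceMove (c : V → Option (Fin k)) (v : V) (col : Fin k)
      (hm : validMove G c v col)
      (h : AliceWins G k false (Function.update c v (some col))) :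
      AliceWins G k true c
  | bobTurn (c : V → Option (Fin k))
      (hne : ∃ v col, validMove G c v col)
      (h : ∀ v col, validMove G c v col →
        AliceWins G k true (Function.update c v (some col))) :
      AliceWins G k false c

/-- `BobWins G k turn c` : starting from the partial proper coloring `c` of `G`,
with `turn = true` meaning that it is Alice's move (`turn = false` : Bob's move),
Bob can force the `k`-coloring game to end with some vertex left uncolored. -/
inductive BobWins {V : Type*} [DecidableEq V] (G : SimpleGraph V) (k : ℕ) :
    Bool → (V → Option (Fin k)) → Prop
  | aliceTurn (c : V → Option (Fin k)) (h0 : ¬ allColored c)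
      (h : ∀ v col, validMove G c v col →
        BobWins G k false (Function.update c v (some col))) :
      BobWins G k true c
  | bobMove (c : V → Option (Fin k)) (v : V) (col : Fin k)
      (hm : validMove G c v col)
      (h : BobWins G k true (Function.update c v (some col))) :
      BobWins G k false c
  | bobStuck (c : V → Option (Fin k)) (h0 : ¬ allColored c)
      (h : ∀ v col, ¬ validMove G c v col) :
      BobWins G k false c

/-- The game chromatic number: the least `k` such that Alice has a winning strategy
in the `k`-coloring game on `G` (Alice moves first), starting from the empty coloring. -/
noncomputable def gameChromaticNumber {V : Type*} [DecidableEq V] (G : SimpleGraph V) : ℕ :=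
  sInf {k | AliceWins G k true (fun _ => none)}

/-- The Bob-start game chromatic number: the least `k` such that Alice has a winning
strategy in the `k`-coloring game on `G` in which Bob moves first. -/
noncomputable def bobStartGameChromaticNumber {V : Type*} [DecidableEq V]
    (G : SimpleGraph V) : ℕ :=
  sInf {k | AliceWins G k false (fun _ => none)}

/-! ### Auxiliary machinery -/

section Aux
set_option linter.unusedSectionVars false

variable {V : Type*} [DecidableEq V] [Fintype V] {G : SimpleGraph V} {k : ℕ}

/-- The set of uncolored vertices. -/
def uncolored (c : V → Option (Fin k)) : Finset V :=
  Finset.univ.filter (fun v => c v = none)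

lemma mem_uncolored {c : V → Option (Fin k)} {v : V} :
    v ∈ uncolored c ↔ c v = none := by
  simp [uncolored]

lemma uncolored_update_lt {c : V → Option (Fin k)} {v : V} (col : Fin k)
    (hv : c v = none) :
    (uncolored (Function.update c v (some col))).card < (uncolored c).card := by
  apply Finset.card_lt_card
  constructor
  · intro w hw
    rw [mem_uncolored] at hw ⊢
    by_cases hwv : w = v
    · subst hwv; rw [Function.update_self] at hw; exact absurd hw (by simp)
    · rwa [Function.update_of_ne hwv] at hw
  · intro hsub
    have hv' := hsub (mem_uncolored.2 hv)
    rw [mem_uncolored, Function.update_self] at hv'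
    exact nomatch hv'

/-- If there is an uncolored vertex all of whose colors appear among its neighbors,
then Bob wins, from any position and with either player to move. -/
lemma bobWins_of_dead (t : V) :
    ∀ (N : ℕ) (c : V → Option (Fin k)), (uncolored c).card ≤ N →
      c t = none → (∀ col : Fin k, ∃ u, G.Adj u t ∧ c u = some col) →
      ∀ turn, BobWins G k turn c := by
  intro N
  induction N with
  | zero =>
    intro c hc ht _ _
    have h1 : t ∈ uncolored c := mem_uncolored.2 ht
    have h2 : 0 < (uncolored c).card := Finset.card_pos.2 ⟨t, h1⟩
    omega
  | succ N ih =>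
    intro c hc ht hd turn
    have htstuck : ∀ col, ¬ validMove G c t col := by
      rintro col ⟨-, h2⟩
      obtain ⟨u, hu, hcu⟩ := hd col
      exact h2 u hu hcu
    have hstep : ∀ v col, validMove G c v col →
        ∀ turn', BobWins G k turn' (Function.update c v (some col)) := by
      intro v col hm turn'
      have hvt : v ≠ t := by
        rintro rfl; exact htstuck col hm
      refine ih (Function.update c v (some col)) ?_ ?_ ?_ turn'
      · have := uncolored_update_lt col hm.1
        omega
      · rwa [Function.update_of_ne (Ne.symm hvt)]
      · intro col'
        obtain ⟨u, hu, hcu⟩ := hd col'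
        refine ⟨u, hu, ?_⟩
        have huv : u ≠ v := by
          rintro rfl; rw [hm.1] at hcu; exact nomatch hcu
        rwa [Function.update_of_ne huv]
    have h0 : ¬ allColored c := fun h => h t ht
    cases turn with
    | true => exact BobWins.aliceTurn c h0 (fun v col hm => hstep v col hm false)
    | false =>
      by_cases hex : ∃ v col, validMove G c v col
      · obtain ⟨v, col, hm⟩ := hex
        exact BobWins.bobMove c v col hm (hstep v col hm true)
      · push_neg at hex
        exact BobWins.bobStuck c h0 hex

/-- Completing a single unobstructed threat: if after Alice's move `(v, col)` the
threat `(t, w)` is untouched, Bob colors `w` with `z` and produces a dead vertex. -/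
lemma bobWins_complete_threat (c : V → Option (Fin 3)) (v : V) (col : Fin 3)
    (hv : c v = none)
    (x y z : Fin 3) (hcov : ∀ c' : Fin 3, c' = x ∨ c' = y ∨ c' = z)
    (t w p q : V)
    (ht : c t = none) (hw : c w = none) (htw : G.Adj w t)
    (hp : G.Adj p t) (hpc : c p = some x) (hq : G.Adj q t) (hqc : c q = some y)
    (hwz : ∀ u, G.Adj u w → c u ≠ some z)
    (hR : ¬ (v = t ∨ v = w ∨ G.Adj v w)) :
    BobWins G 3 false (Function.update c v (some col)) := by
  push_neg at hR
  obtain ⟨hvt, hvw, hvadj⟩ := hR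
  set c1 := Function.update c v (some col) with hc1
  have hmw : validMove G c1 w z := by
    constructor
    · rw [hc1, Function.update_of_ne (Ne.symm hvw)]; exact hw
    · intro u hu
      have huv : u ≠ v := by rintro rfl; exact hvadj hu
      rw [hc1, Function.update_of_ne huv]
      exact hwz u hu
  refine BobWins.bobMove c1 w z hmw ?_
  set c2 := Function.update c1 w (some z) with hc2
  have val_of (u : V) (hu1 : u ≠ w) (hu2 : u ≠ v) : c2 u = c u := by
    rw [hc2, Function.update_of_ne hu1, hc1, Function.update_of_ne hu2]
  have htne_w : t ≠ w := (G.ne_of_adj htw).symm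
  have hpnew : p ≠ w := by rintro rfl; rw [hpc] at hw; exact nomatch hw
  have hpnev : p ≠ v := by rintro rfl; rw [hpc] at hv; exact nomatch hv
  have hqnew : q ≠ w := by rintro rfl; rw [hqc] at hw; exact nomatch hw
  have hqnev : q ≠ v := by rintro rfl; rw [hqc] at hv; exact nomatch hv
  refine bobWins_of_dead t (uncolored c2).card c2 le_rfl ?_ ?_ true
  · rw [val_of t htne_w (Ne.symm hvt)]; exact ht
  · intro col'
    rcases hcov col' with rfl | rfl | rfl
    · exact ⟨p, hp, by rw [val_of p hpnew hpnev]; exact hpc⟩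
    · exact ⟨q, hq, by rw [val_of q hqnew hqnev]; exact hqc⟩
    · exact ⟨w, htw, by rw [hc2, Function.update_self]⟩

/-- The double-threat lemma: with two threats in disjoint regions, whatever Alice
does, Bob completes the untouched threat. -/
lemma bobWins_double_threat (c : V → Option (Fin 3))
    (x y z : Fin 3) (hcov : ∀ c' : Fin 3, c' = x ∨ c' = y ∨ c' = z)
    (t1 w1 t2 w2 p1 q1 p2 q2 : V)
    (ht1 : c t1 = none) (hw1 : c w1 = none) (htw1 : G.Adj w1 t1)
    (hp1 : G.Adj p1 t1) (hp1c : c p1 = some x) (hq1 : G.Adj q1 t1) (hq1c : c q1 = some y)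
    (ht2 : c t2 = none) (hw2 : c w2 = none) (htw2 : G.Adj w2 t2)
    (hp2 : G.Adj p2 t2) (hp2c : c p2 = some x) (hq2 : G.Adj q2 t2) (hq2c : c q2 = some y)
    (hwz1 : ∀ u, G.Adj u w1 → c u ≠ some z)
    (hwz2 : ∀ u, G.Adj u w2 → c u ≠ some z)
    (hdisj : ∀ v, (v = t1 ∨ v = w1 ∨ G.Adj v w1) → (v = t2 ∨ v = w2 ∨ G.Adj v w2) → False) :
    BobWins G 3 true c := by
  refine BobWins.aliceTurn c (fun h => h t1 ht1) ?_
  intro v col hm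
  by_cases h1 : v = t1 ∨ v = w1 ∨ G.Adj v w1
  · exact bobWins_complete_threat c v col hm.1 x y z hcov t2 w2 p2 q2 ht2 hw2 htw2
      hp2 hp2c hq2 hq2c hwz2 (fun h2 => hdisj v h1 h2)
  · exact bobWins_complete_threat c v col hm.1 x y z hcov t1 w1 p1 q1 ht1 hw1 htw1
      hp1 hp1c hq1 hq1c hwz1 h1

/-- Alice and Bob cannot both win from the same position. -/
lemma not_aliceWins_of_bobWins {turn : Bool} {c : V → Option (Fin k)}
    (hA : AliceWins G k turn c) : ¬ BobWins G k turn c := by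
  induction hA with
  | finished turn c h =>
    intro hB
    cases hB with
    | aliceTurn c h0 _ => exact h0 h
    | bobMove c v col hm _ => exact h v hm.1
    | bobStuck c h0 _ => exact h0 h
  | aliceMove c v col hm _ ih =>
    intro hB
    cases hB with
    | aliceTurn c h0 hB' => exact ih (hB' v col hm)
  | bobTurn c hne _ ih =>
    intro hB
    cases hB with
    | bobMove c v col hm hB' => exact ih v col hm hB'
    | bobStuck c h0 hs =>
      obtain ⟨v, col, hm⟩ := hne
      exact hs v col hm

end Aux

/-! ### Grid-specific lemmas -/

section Grid

/-- Adjacency in the grid, in terms of natural-number coordinates. -/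
lemma grid_adj {n : ℕ} {u v : Fin 4 × Fin n} :
    (pathGraph 4 □ pathGraph n).Adj u v ↔
      ((u.1.val + 1 = v.1.val ∨ v.1.val + 1 = u.1.val) ∧ u.2.val = v.2.val) ∨
      ((u.2.val + 1 = v.2.val ∨ v.2.val + 1 = u.2.val) ∧ u.1.val = v.1.val) := by
  simp only [boxProd_adj, pathGraph_adj, Fin.ext_iff]

/-- Natural-number adjacency relation for the `4 × n` grid. -/
def nadj (r c r' c' : ℕ) : Prop :=
  ((r + 1 = r' ∨ r' + 1 = r) ∧ c = c') ∨ ((c + 1 = c' ∨ c' + 1 = c) ∧ r = r')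

lemma grid_adj_mk {n : ℕ} {r c r' c' : ℕ} (hr : r < 4) (hc : c < n) (hr' : r' < 4)
    (hc' : c' < n) (h : nadj r c r' c') :
    (pathGraph 4 □ pathGraph n).Adj ((⟨r, hr⟩, ⟨c, hc⟩) : Fin 4 × Fin n)
      ((⟨r', hr'⟩, ⟨c', hc'⟩) : Fin 4 × Fin n) := by
  rw [grid_adj]
  simp only []
  unfold nadj at h
  tauto

lemma grid_adj_dest {n : ℕ} {u : Fin 4 × Fin n} {r' c' : ℕ} {hr' : r' < 4} {hc' : c' < n}
    (h : (pathGraph 4 □ pathGraph n).Adj u ((⟨r', hr'⟩, ⟨c', hc'⟩) : Fin 4 × Fin n)) :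
    nadj u.1.val u.2.val r' c' := by
  rw [grid_adj] at h
  unfold nadj
  tauto

lemma grid_ne {n : ℕ} {r c r' c' : ℕ} {hr : r < 4} {hc : c < n} {hr' : r' < 4}
    {hc' : c' < n} (h : ¬ (r = r' ∧ c = c')) :
    ((⟨r, hr⟩, ⟨c, hc⟩) : Fin 4 × Fin n) ≠ ((⟨r', hr'⟩, ⟨c', hc'⟩) : Fin 4 × Fin n) := by
  intro he
  rw [Prod.ext_iff, Fin.ext_iff, Fin.ext_iff] at he
  exact h he

lemma eq_mk_iff {n : ℕ} {u : Fin 4 × Fin n} {r c : ℕ} {hr : r < 4} {hc : c < n} :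
    u = ((⟨r, hr⟩, ⟨c, hc⟩) : Fin 4 × Fin n) ↔ u.1.val = r ∧ u.2.val = c := by
  rw [Prod.ext_iff, Fin.ext_iff, Fin.ext_iff]

/-- Bob's winning reply in the 3-coloring game: given Alice's first move at
`(rv, av)` with color `x`, Bob answers at `(rb, ab)` with color `y`, creating the
two threats `(t1, w1)` and `(t2, w2)`. -/
lemma grid_bob_reply (n : ℕ) (x y z : Fin 3) (hxy : x ≠ y) (hxz : x ≠ z) (hyz : y ≠ z)
    (hcov : ∀ c' : Fin 3, c' = x ∨ c' = y ∨ c' = z)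
    (rv av rb ab rt1 at1 rw1 aw1 rt2 at2 rw2 aw2 : ℕ)
    (hrv : rv < 4) (hav : av < n) (hrb : rb < 4) (hab : ab < n)
    (hrt1 : rt1 < 4) (hat1 : at1 < n) (hrw1 : rw1 < 4) (haw1 : aw1 < n)
    (hrt2 : rt2 < 4) (hat2 : at2 < n) (hrw2 : rw2 < 4) (haw2 : aw2 < n)
    (a_w1t1 : nadj rw1 aw1 rt1 at1) (a_w2t2 : nadj rw2 aw2 rt2 at2)
    (a_vt1 : nadj rv av rt1 at1) (a_vt2 : nadj rv av rt2 at2)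
    (a_bt1 : nadj rb ab rt1 at1) (a_bt2 : nadj rb ab rt2 at2)
    (ne_vb : ¬ (rv = rb ∧ av = ab))
    (ne_t1v : ¬ (rt1 = rv ∧ at1 = av)) (ne_t1b : ¬ (rt1 = rb ∧ at1 = ab))
    (ne_t2v : ¬ (rt2 = rv ∧ at2 = av)) (ne_t2b : ¬ (rt2 = rb ∧ at2 = ab))
    (ne_w1v : ¬ (rw1 = rv ∧ aw1 = av)) (ne_w1b : ¬ (rw1 = rb ∧ aw1 = ab))
    (ne_w2v : ¬ (rw2 = rv ∧ aw2 = av)) (ne_w2b : ¬ (rw2 = rb ∧ aw2 = ab))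
    (hdisj : ∀ r c, r < 4 → c < n →
      ((r = rt1 ∧ c = at1) ∨ (r = rw1 ∧ c = aw1) ∨ nadj r c rw1 aw1) →
      ((r = rt2 ∧ c = at2) ∨ (r = rw2 ∧ c = aw2) ∨ nadj r c rw2 aw2) → False) :
    BobWins (pathGraph 4 □ pathGraph n) 3 false
      (Function.update (fun _ => none) ((⟨rv, hrv⟩, ⟨av, hav⟩) : Fin 4 × Fin n)
        (some x)) := by
  set vA : Fin 4 × Fin n := (⟨rv, hrv⟩, ⟨av, hav⟩) with hvA
  set vB : Fin 4 × Fin n := (⟨rb, hrb⟩, ⟨ab, hab⟩) with hvB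
  set t1 : Fin 4 × Fin n := (⟨rt1, hrt1⟩, ⟨at1, hat1⟩) with hvt1
  set w1 : Fin 4 × Fin n := (⟨rw1, hrw1⟩, ⟨aw1, haw1⟩) with hvw1
  set t2 : Fin 4 × Fin n := (⟨rt2, hrt2⟩, ⟨at2, hat2⟩) with hvt2
  set w2 : Fin 4 × Fin n := (⟨rw2, hrw2⟩, ⟨aw2, haw2⟩) with hvw2
  set c1 : Fin 4 × Fin n → Option (Fin 3) :=
    Function.update (fun _ => none) vA (some x) with hc1
  have hBA : vB ≠ vA := grid_ne (fun h => ne_vb ⟨h.1.symm, h.2.symm⟩)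
  have hval1 : ∀ u, u ≠ vA → c1 u = none := by
    intro u hu; rw [hc1, Function.update_of_ne hu]
  have hmB : validMove (pathGraph 4 □ pathGraph n) c1 vB y := by
    refine ⟨hval1 vB hBA, ?_⟩
    intro u _
    by_cases hu : u = vA
    · subst hu; rw [hc1, Function.update_self]
      exact fun h => hxy (Option.some_injective _ h)
    · rw [hval1 u hu]; exact fun h => nomatch h
  refine BobWins.bobMove c1 vB y hmB ?_
  set c2 : Fin 4 × Fin n → Option (Fin 3) := Function.update c1 vB (some y) with hc2
  have hval2 : ∀ u, u ≠ vA → u ≠ vB → c2 u = none := by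
    intro u hu1 hu2; rw [hc2, Function.update_of_ne hu2]; exact hval1 u hu1
  have hc2A : c2 vA = some x := by
    rw [hc2, Function.update_of_ne (Ne.symm hBA), hc1, Function.update_self]
  have hc2B : c2 vB = some y := by rw [hc2, Function.update_self]
  have hc2z : ∀ u, c2 u ≠ some z := by
    intro u
    by_cases h1 : u = vA
    · subst h1; rw [hc2A]; exact fun h => hxz (Option.some_injective _ h)
    · by_cases h2 : u = vB
      · subst h2; rw [hc2B]; exact fun h => hyz (Option.some_injective _ h)
      · rw [hval2 u h1 h2]; exact fun h => nomatch h
  refine bobWins_double_threat c2 x y z hcov t1 w1 t2 w2 vA vB vA vB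
    (hval2 t1 (grid_ne ne_t1v) (grid_ne ne_t1b))
    (hval2 w1 (grid_ne ne_w1v) (grid_ne ne_w1b))
    (grid_adj_mk _ _ _ _ a_w1t1)
    (grid_adj_mk _ _ _ _ a_vt1) hc2A
    (grid_adj_mk _ _ _ _ a_bt1) hc2B
    (hval2 t2 (grid_ne ne_t2v) (grid_ne ne_t2b))
    (hval2 w2 (grid_ne ne_w2v) (grid_ne ne_w2b))
    (grid_adj_mk _ _ _ _ a_w2t2)
    (grid_adj_mk _ _ _ _ a_vt2) hc2A
    (grid_adj_mk _ _ _ _ a_bt2) hc2B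
    (fun u _ => hc2z u) (fun u _ => hc2z u) ?_
  intro u h1 h2
  refine hdisj u.1.val u.2.val u.1.isLt u.2.isLt ?_ ?_
  · rcases h1 with h | h | h
    · exact Or.inl (eq_mk_iff.1 h)
    · exact Or.inr (Or.inl (eq_mk_iff.1 h))
    · exact Or.inr (Or.inr (grid_adj_dest h))
  · rcases h2 with h | h | h
    · exact Or.inl (eq_mk_iff.1 h)
    · exact Or.inr (Or.inl (eq_mk_iff.1 h))
    · exact Or.inr (Or.inr (grid_adj_dest h))

end Grid

section Strategy

lemma fin3_exists : ∀ x : Fin 3, ∃ y z : Fin 3,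
    x ≠ y ∧ x ≠ z ∧ y ≠ z ∧ ∀ c : Fin 3, c = x ∨ c = y ∨ c = z := by decide

lemma fin2_exists : ∀ x : Fin 2, ∃ y : Fin 2, x ≠ y ∧ ∀ c : Fin 2, c = x ∨ c = y := by
  decide

/-- Bob wins the 3-coloring game on the `4 × n` grid for `n ≥ 18`. -/
lemma bob_wins_three (n : ℕ) (hn : 18 ≤ n) :
    BobWins (pathGraph 4 □ pathGraph n) 3 true (fun _ => none) := by
  refine BobWins.aliceTurn _ ?_ ?_
  · intro h
    exact h ((⟨0, by omega⟩, ⟨0, by omega⟩) : Fin 4 × Fin n) rfl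
  · rintro ⟨⟨r, hr⟩, ⟨a, ha⟩⟩ x -
    obtain ⟨y, z, hxy, hxz, hyz, hcov⟩ := fin3_exists x
    interval_cases r
    · by_cases hd : a + 2 < n
      · exact grid_bob_reply n x y z hxy hxz hyz hcov 0 a 1 (a+1) 0 (a+1) 0 (a+2) 1 a 2 a
          (by omega) ha (by omega) (by omega) (by omega) (by omega) (by omega) (by omega)
          (by omega) (by omega) (by omega) (by omega)
          (by unfold nadj; omega) (by unfold nadj; omega) (by unfold nadj; omega)
          (by unfold nadj; omega) (by unfold nadj; omega) (by unfold nadj; omega)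
          (by omega) (by omega) (by omega) (by omega) (by omega) (by omega) (by omega)
          (by omega) (by omega)
          (by intro r c h1 h2 h3 h4; unfold nadj at h3 h4; omega)
      · exact grid_bob_reply n x y z hxy hxz hyz hcov 0 a 1 (a-1) 0 (a-1) 0 (a-2) 1 a 2 a
          (by omega) ha (by omega) (by omega) (by omega) (by omega) (by omega) (by omega)
          (by omega) (by omega) (by omega) (by omega)
          (by unfold nadj; omega) (by unfold nadj; omega) (by unfold nadj; omega)
          (by unfold nadj; omega) (by unfold nadj; omega) (by unfold nadj; omega)
          (by omega) (by omega) (by omega) (by omega) (by omega) (by omega) (by omega)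
          (by omega) (by omega)
          (by intro r c h1 h2 h3 h4; unfold nadj at h3 h4; omega)
    · by_cases hd : a + 1 < n
      · exact grid_bob_reply n x y z hxy hxz hyz hcov 1 a 2 (a+1) 1 (a+1) 0 (a+1) 2 a 3 a
          (by omega) ha (by omega) (by omega) (by omega) (by omega) (by omega) (by omega)
          (by omega) (by omega) (by omega) (by omega)
          (by unfold nadj; omega) (by unfold nadj; omega) (by unfold nadj; omega)
          (by unfold nadj; omega) (by unfold nadj; omega) (by unfold nadj; omega)
          (by omega) (by omega) (by omega) (by omega) (by omega) (by omega) (by omega)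
          (by omega) (by omega)
          (by intro r c h1 h2 h3 h4; unfold nadj at h3 h4; omega)
      · exact grid_bob_reply n x y z hxy hxz hyz hcov 1 a 2 (a-1) 1 (a-1) 0 (a-1) 2 a 3 a
          (by omega) ha (by omega) (by omega) (by omega) (by omega) (by omega) (by omega)
          (by omega) (by omega) (by omega) (by omega)
          (by unfold nadj; omega) (by unfold nadj; omega) (by unfold nadj; omega)
          (by unfold nadj; omega) (by unfold nadj; omega) (by unfold nadj; omega)
          (by omega) (by omega) (by omega) (by omega) (by omega) (by omega) (by omega)
          (by omega) (by omega)
          (by intro r c h1 h2 h3 h4; unfold nadj at h3 h4; omega)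
    · by_cases hd : a + 1 < n
      · exact grid_bob_reply n x y z hxy hxz hyz hcov 2 a 1 (a+1) 2 (a+1) 3 (a+1) 1 a 0 a
          (by omega) ha (by omega) (by omega) (by omega) (by omega) (by omega) (by omega)
          (by omega) (by omega) (by omega) (by omega)
          (by unfold nadj; omega) (by unfold nadj; omega) (by unfold nadj; omega)
          (by unfold nadj; omega) (by unfold nadj; omega) (by unfold nadj; omega)
          (by omega) (by omega) (by omega) (by omega) (by omega) (by omega) (by omega)
          (by omega) (by omega)
          (by intro r c h1 h2 h3 h4; unfold nadj at h3 h4; omega)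
      · exact grid_bob_reply n x y z hxy hxz hyz hcov 2 a 1 (a-1) 2 (a-1) 3 (a-1) 1 a 0 a
          (by omega) ha (by omega) (by omega) (by omega) (by omega) (by omega) (by omega)
          (by omega) (by omega) (by omega) (by omega)
          (by unfold nadj; omega) (by unfold nadj; omega) (by unfold nadj; omega)
          (by unfold nadj; omega) (by unfold nadj; omega) (by unfold nadj; omega)
          (by omega) (by omega) (by omega) (by omega) (by omega) (by omega) (by omega)
          (by omega) (by omega)
          (by intro r c h1 h2 h3 h4; unfold nadj at h3 h4; omega)
    · by_cases hd : a + 2 < n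
      · exact grid_bob_reply n x y z hxy hxz hyz hcov 3 a 2 (a+1) 3 (a+1) 3 (a+2) 2 a 1 a
          (by omega) ha (by omega) (by omega) (by omega) (by omega) (by omega) (by omega)
          (by omega) (by omega) (by omega) (by omega)
          (by unfold nadj; omega) (by unfold nadj; omega) (by unfold nadj; omega)
          (by unfold nadj; omega) (by unfold nadj; omega) (by unfold nadj; omega)
          (by omega) (by omega) (by omega) (by omega) (by omega) (by omega) (by omega)
          (by omega) (by omega)
          (by intro r c h1 h2 h3 h4; unfold nadj at h3 h4; omega)
      · exact grid_bob_reply n x y z hxy hxz hyz hcov 3 a 2 (a-1) 3 (a-1) 3 (a-2) 2 a 1 a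
          (by omega) ha (by omega) (by omega) (by omega) (by omega) (by omega) (by omega)
          (by omega) (by omega) (by omega) (by omega)
          (by unfold nadj; omega) (by unfold nadj; omega) (by unfold nadj; omega)
          (by unfold nadj; omega) (by unfold nadj; omega) (by unfold nadj; omega)
          (by omega) (by omega) (by omega) (by omega) (by omega) (by omega) (by omega)
          (by omega) (by omega)
          (by intro r c h1 h2 h3 h4; unfold nadj at h3 h4; omega)

end Strategy

section SmallK

lemma bob_wins_zero (n : ℕ) (hn : 18 ≤ n) :
    BobWins (pathGraph 4 □ pathGraph n) 0 true (fun _ => none) := by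
  refine BobWins.aliceTurn _ ?_ ?_
  · intro h
    exact h ((⟨0, by omega⟩, ⟨0, by omega⟩) : Fin 4 × Fin n) rfl
  · intro v col _
    exact absurd col.isLt (by omega)

lemma bob_wins_one (n : ℕ) (hn : 18 ≤ n) :
    BobWins (pathGraph 4 □ pathGraph n) 1 true (fun _ => none) := by
  refine BobWins.aliceTurn _ ?_ ?_
  · intro h
    exact h ((⟨0, by omega⟩, ⟨0, by omega⟩) : Fin 4 × Fin n) rfl
  · rintro ⟨⟨r, hr⟩, ⟨a, ha⟩⟩ col -
    have key : ∀ (a' : ℕ) (ha' : a' < n), a' ≠ a → nadj r a r a' →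
        BobWins (pathGraph 4 □ pathGraph n) 1 false
          (Function.update (fun _ => none) ((⟨r, hr⟩, ⟨a, ha⟩) : Fin 4 × Fin n)
            (some col)) := by
      intro a' ha' hne hadj
      refine bobWins_of_dead ((⟨r, hr⟩, ⟨a', ha'⟩) : Fin 4 × Fin n) _ _ le_rfl ?_ ?_ false
      · rw [Function.update_of_ne (grid_ne (by omega))]
      · intro col'
        refine ⟨(⟨r, hr⟩, ⟨a, ha⟩), grid_adj_mk _ _ _ _ (by unfold nadj at hadj ⊢; omega), ?_⟩
        rw [Function.update_self]
        exact congrArg some (Subsingleton.elim col col')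
    by_cases hd : a + 1 < n
    · exact key (a+1) hd (by omega) (by unfold nadj; omega)
    · exact key (a-1) (by omega) (by omega) (by unfold nadj; omega)

lemma bob_wins_two (n : ℕ) (hn : 18 ≤ n) :
    BobWins (pathGraph 4 □ pathGraph n) 2 true (fun _ => none) := by
  refine BobWins.aliceTurn _ ?_ ?_
  · intro h
    exact h ((⟨0, by omega⟩, ⟨0, by omega⟩) : Fin 4 × Fin n) rfl
  · rintro ⟨⟨r, hr⟩, ⟨a, ha⟩⟩ x -
    obtain ⟨y, hxy, hcov⟩ := fin2_exists x
    have key : ∀ (ab at' : ℕ) (hab : ab < n) (hat : at' < n), ab ≠ a → at' ≠ a →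
        at' ≠ ab → nadj r a r at' → nadj r ab r at' →
        BobWins (pathGraph 4 □ pathGraph n) 2 false
          (Function.update (fun _ => none) ((⟨r, hr⟩, ⟨a, ha⟩) : Fin 4 × Fin n)
            (some x)) := by
      intro ab at' hab hat h1 h2 h3 hadj1 hadj2
      set vA : Fin 4 × Fin n := (⟨r, hr⟩, ⟨a, ha⟩) with hvA
      set vB : Fin 4 × Fin n := (⟨r, hr⟩, ⟨ab, hab⟩) with hvB
      set t : Fin 4 × Fin n := (⟨r, hr⟩, ⟨at', hat⟩) with hvt
      set c1 : Fin 4 × Fin n → Option (Fin 2) :=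
        Function.update (fun _ => none) vA (some x) with hc1
      have hBA : vB ≠ vA := grid_ne (by omega)
      have htA : t ≠ vA := grid_ne (by omega)
      have htB : t ≠ vB := grid_ne (by omega)
      have hmB : validMove (pathGraph 4 □ pathGraph n) c1 vB y := by
        refine ⟨by rw [hc1, Function.update_of_ne hBA], ?_⟩
        intro u _
        by_cases hu : u = vA
        · subst hu; rw [hc1, Function.update_self]
          exact fun h => hxy (Option.some_injective _ h)
        · rw [hc1, Function.update_of_ne hu]; exact fun h => nomatch h
      refine BobWins.bobMove c1 vB y hmB ?_
      set c2 : Fin 4 × Fin n → Option (Fin 2) := Function.update c1 vB (some y) with hc2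
      refine bobWins_of_dead t _ _ le_rfl ?_ ?_ true
      · rw [hc2, Function.update_of_ne htB, hc1, Function.update_of_ne htA]
      · intro col'
        rcases hcov col' with rfl | rfl
        · refine ⟨vA, grid_adj_mk _ _ _ _ (by unfold nadj at hadj1 ⊢; omega), ?_⟩
          rw [hc2, Function.update_of_ne (Ne.symm hBA), hc1, Function.update_self]
        · refine ⟨vB, grid_adj_mk _ _ _ _ (by unfold nadj at hadj2 ⊢; omega), ?_⟩
          rw [hc2, Function.update_self]
    by_cases hd : a + 2 < n
    · exact key (a+2) (a+1) hd (by omega) (by omega) (by omega) (by omega)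
        (by unfold nadj; omega) (by unfold nadj; omega)
    · exact key (a-2) (a-1) (by omega) (by omega) (by omega) (by omega) (by omega)
        (by unfold nadj; omega) (by unfold nadj; omega)

end SmallK

section AliceFive

lemma exists_valid_color {n : ℕ} (c : Fin 4 × Fin n → Option (Fin 5))
    (v : Fin 4 × Fin n) (hv : c v = none) :
    ∃ col : Fin 5, validMove (pathGraph 4 □ pathGraph n) c v col := by
  classical
  set G := pathGraph 4 □ pathGraph n with hG
  set S : Finset (Fin 5) :=
    Finset.univ.filter (fun col => ∃ u, G.Adj u v ∧ c u = some col) with hS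
  have hcard : S.card ≤ 4 := by
    have hle := Finset.card_le_card_of_injOn (s := S)
      (f := fun col : Fin 5 =>
        if h : ∃ u, G.Adj u v ∧ c u = some col then
          (decide (h.choose.1.val = v.1.val),
           decide (h.choose.1.val + h.choose.2.val < v.1.val + v.2.val))
        else (true, true))
      (t := (Finset.univ : Finset (Bool × Bool))) (fun a _ => Finset.mem_univ _) ?_
    · simpa using hle
    · intro c1 hc1 c2 hc2 he
      have h1 : ∃ u, G.Adj u v ∧ c u = some c1 :=
        (Finset.mem_filter.mp (Finset.mem_coe.mp hc1)).2
      have h2 : ∃ u, G.Adj u v ∧ c u = some c2 :=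
        (Finset.mem_filter.mp (Finset.mem_coe.mp hc2)).2
      simp only [dif_pos h1, dif_pos h2, Prod.ext_iff] at he
      obtain ⟨ha1, hv1⟩ := h1.choose_spec
      obtain ⟨ha2, hv2⟩ := h2.choose_spec
      have e1 : (h1.choose.1.val = v.1.val) ↔ (h2.choose.1.val = v.1.val) := by
        have := he.1
        simpa [decide_eq_decide] using this
      have e2 : (h1.choose.1.val + h1.choose.2.val < v.1.val + v.2.val) ↔
          (h2.choose.1.val + h2.choose.2.val < v.1.val + v.2.val) := by
        have := he.2
        simpa [decide_eq_decide] using this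
      have e1' := iff_iff_and_or_not_and_not.mp e1
      have e2' := iff_iff_and_or_not_and_not.mp e2
      have ha1' := grid_adj.mp ha1
      have ha2' := grid_adj.mp ha2
      have hu : h1.choose = h2.choose := by
        rw [Prod.ext_iff, Fin.ext_iff, Fin.ext_iff]
        constructor <;> omega
      rw [hu, hv2] at hv1
      exact (Option.some_injective _ hv1).symm
  have hex : ∃ col : Fin 5, col ∉ S := by
    by_contra h
    push_neg at h
    have he : S = Finset.univ := Finset.eq_univ_iff_forall.2 h
    rw [he, Finset.card_univ] at hcard
    simp at hcard
  obtain ⟨col, hcol⟩ := hex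
  refine ⟨col, hv, ?_⟩
  intro u hu hc
  exact hcol (by rw [hS, Finset.mem_filter]; exact ⟨Finset.mem_univ _, ⟨u, hu, hc⟩⟩)

lemma alice_wins_five (n : ℕ) :
    ∀ (N : ℕ) (c : Fin 4 × Fin n → Option (Fin 5)) (turn : Bool),
      (uncolored c).card ≤ N → AliceWins (pathGraph 4 □ pathGraph n) 5 turn c := by
  intro N
  induction N with
  | zero =>
    intro c turn hc
    refine AliceWins.finished _ _ ?_
    intro v hv
    have h1 : v ∈ uncolored c := mem_uncolored.2 hv
    have h2 : 0 < (uncolored c).card := Finset.card_pos.2 ⟨v, h1⟩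
    omega
  | succ N ih =>
    intro c turn hc
    by_cases hall : allColored c
    · exact AliceWins.finished _ _ hall
    · have hv : ∃ v, c v = none := by
        unfold allColored at hall
        push_neg at hall
        obtain ⟨v, hv⟩ := hall
        exact ⟨v, by simpa using hv⟩
      obtain ⟨v, hv⟩ := hv
      obtain ⟨col, hcol⟩ := exists_valid_color c v hv
      cases turn with
      | true =>
        refine AliceWins.aliceMove c v col hcol (ih _ false ?_)
        have := uncolored_update_lt col hv
        omega
      | false =>
        refine AliceWins.bobTurn c ⟨v, col, hcol⟩ ?_
        intro v' col' hm'
        refine ih _ true ?_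
        have := uncolored_update_lt col' hm'.1
        omega

end AliceFive

/-- For every `n ≥ 18`, the game chromatic number of the `4 × n` grid graph
`P₄ □ Pₙ` is at least `4`; that is, Bob has a winning strategy in the
`3`-coloring game (Alice moving first) on `P₄ □ Pₙ`. -/
theorem four_le_gameChromaticNumber_grid (n : ℕ) (hn : 18 ≤ n) :
    4 ≤ gameChromaticNumber (pathGraph 4 □ pathGraph n) ∧
      BobWins (pathGraph 4 □ pathGraph n) 3 true (fun _ => none) := by
  have hbob3 := bob_wins_three n hn
  refine ⟨?_, hbob3⟩
  unfold gameChromaticNumber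
  set S : Set ℕ := {k | AliceWins (pathGraph 4 □ pathGraph n) k true (fun _ => none)}
    with hS
  have h5 : 5 ∈ S := alice_wins_five n _ _ true le_rfl
  have hmem : sInf S ∈ S := Nat.sInf_mem ⟨5, h5⟩
  by_contra hlt
  push_neg at hlt
  have hA : AliceWins (pathGraph 4 □ pathGraph n) (sInf S) true (fun _ => none) := hmem
  have hc : sInf S = 0 ∨ sInf S = 1 ∨ sInf S = 2 ∨ sInf S = 3 := by omega
  rcases hc with h | h | h | h <;> rw [h] at hA
  · exact not_aliceWins_of_bobWins hA (bob_wins_zero n hn)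
  · exact not_aliceWins_of_bobWins hA (bob_wins_one n hn)
  · exact not_aliceWins_of_bobWins hA (bob_wins_two n hn)
  · exact not_aliceWins_of_bobWins hA hbob3
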